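/- Let G = (V, E) be a graph with a linear order < on E. For every edge subset A ⊆ E there exists a spanning forest F = (V, A_f) of G, a subset A_i ⊆ E_i(F) of its internally active edges, and a subset A_e ⊆ E_e(F) of its externally active edges, such that A = (A_f \ A_i) ∪ A_e. Moreover A_i = A_f \ A and A_e = A \ A_f. -/

import Mathlib

open Finset SimpleGraph

set_option linter.unusedSectionVars false

attribute [local instance] Classical.propDecidable

/-- A multigraph on vertex type `V` with edge index type `E` is given by a map
`ends : E → Sym2 V` (loops and parallel edges are allowed).  For an edge subset
`A ⊆ E`, `edgeGraph ends A` is the simple graph on `V` whose adjacency is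
witnessed by some edge of `A`; it determines the connected components of the
spanning subgraph `(V, A)`. -/
def edgeGraph {V E : Type} (ends : E → Sym2 V) (A : Finset E) : SimpleGraph V where
  Adj a b := a ≠ b ∧ ∃ e ∈ A, ends e = s(a, b)
  symm := by
    constructor; rintro a b ⟨hab, e, he, hs⟩
    exact ⟨Ne.symm hab, e, he, by rw [hs, Sym2.eq_swap]⟩
  loopless := by constructor; rintro a ⟨h, -⟩; exact h rfl

/-- `kc ends A` is the number of connected components of the spanning subgraph `(V, A)`. -/
noncomputable def kc {V E : Type} (ends : E → Sym2 V) (A : Finset E) : ℕ :=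
  Nat.card (edgeGraph ends A).ConnectedComponent

/-- `(V, A)` is a spanning forest of `(V, E)`: it is a forest
(`|A| + k((V,A)) = |V|`, which rules out loops, parallel edges and cycles)
with as many connected components as the whole graph. -/
def IsSpanningForest {V E : Type} [Fintype V] [Fintype E] (ends : E → Sym2 V)
    (A : Finset E) : Prop :=
  A.card + kc ends A = Fintype.card V ∧ kc ends A = kc ends Finset.univ

/-- `F - e + f`. -/
def swapEdge {E : Type} [DecidableEq E] (A : Finset E) (e f : E) : Finset E :=
  insert f (A.erase e)

/-- `e` is internally active in the spanning forest `(V, A)`. -/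
def InternallyActive {V E : Type} [Fintype V] [Fintype E] [DecidableEq E] [LinearOrder E]
    (ends : E → Sym2 V) (A : Finset E) (e : E) : Prop :=
  e ∈ A ∧ ¬ ∃ f, f ∉ A ∧ e < f ∧ IsSpanningForest ends (swapEdge A e f)

/-- `f` is externally active in the spanning forest `(V, A)`. -/
def ExternallyActive {V E : Type} [Fintype V] [Fintype E] [DecidableEq E] [LinearOrder E]
    (ends : E → Sym2 V) (A : Finset E) (f : E) : Prop :=
  f ∉ A ∧ ¬ ∃ e, e ∈ A ∧ f < e ∧ IsSpanningForest ends (swapEdge A e f)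

/-- The set `E_i(F)` of internally active edges of the spanning forest `F = (V, A)`. -/
noncomputable def intAct {V E : Type} [Fintype V] [Fintype E] [DecidableEq E] [LinearOrder E]
    (ends : E → Sym2 V) (A : Finset E) : Finset E :=
  Finset.univ.filter (InternallyActive ends A)

/-- The set `E_e(F)` of externally active edges of the spanning forest `F = (V, A)`. -/
noncomputable def extAct {V E : Type} [Fintype V] [Fintype E] [DecidableEq E] [LinearOrder E]
    (ends : E → Sym2 V) (A : Finset E) : Finset E :=
  Finset.univ.filter (ExternallyActive ends A)

variable {V E : Type} [DecidableEq E]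

lemma edgeGraph_mono {ends : E → Sym2 V} {S T : Finset E} (h : S ⊆ T) :
    edgeGraph ends S ≤ edgeGraph ends T := by
  rintro a b ⟨hab, e, he, hs⟩
  exact ⟨hab, e, h he, hs⟩

lemma sym2_exists (z : Sym2 V) : ∃ a b, z = s(a, b) :=
  Sym2.ind (fun a b => ⟨a, b, rfl⟩) z

lemma reach_insert {ends : E → Sym2 V} {S : Finset E} {f : E} {a b : V}
    (hf : ends f = s(a, b)) (x y : V) :
    (edgeGraph ends (insert f S)).Reachable x y ↔
      (edgeGraph ends S).Reachable x y ∨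
      ((edgeGraph ends S).Reachable x a ∧ (edgeGraph ends S).Reachable b y) ∨
      ((edgeGraph ends S).Reachable x b ∧ (edgeGraph ends S).Reachable a y) := by
  set G := edgeGraph ends S with hG
  constructor
  · rintro ⟨w⟩
    induction w with
    | nil => exact Or.inl (Reachable.refl _)
    | @cons u v y hadj w ih =>
      obtain ⟨huv, e, he, hs⟩ := hadj
      rcases Finset.mem_insert.mp he with rfl | heS
      · -- edge is f : s(u,v) = s(a,b)
        rw [hf] at hs
        have hG' : ∀ p q : V, G.Reachable p a → G.Reachable b q →
            ((G.Reachable u v → False) → True) := fun _ _ _ _ _ => trivial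
        rcases Sym2.eq_iff.mp hs.symm with ⟨rfl, rfl⟩ | ⟨rfl, rfl⟩
        · -- u = a, v = b
          rcases ih with h | ⟨h1, h2⟩ | ⟨h1, h2⟩
          · exact Or.inr (Or.inl ⟨Reachable.refl _, h⟩)
          · exact Or.inl (h1.symm.trans h2)
          · exact Or.inl h2
        · -- u = b, v = a
          rcases ih with h | ⟨h1, h2⟩ | ⟨h1, h2⟩
          · exact Or.inr (Or.inr ⟨Reachable.refl _, h⟩)
          · exact Or.inl h2
          · exact Or.inl (h1.symm.trans h2)
      · have hadjG : G.Adj u v := ⟨huv, e, heS, hs⟩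
        rcases ih with h | ⟨h1, h2⟩ | ⟨h1, h2⟩
        · exact Or.inl (hadjG.reachable.trans h)
        · exact Or.inr (Or.inl ⟨hadjG.reachable.trans h1, h2⟩)
        · exact Or.inr (Or.inr ⟨hadjG.reachable.trans h1, h2⟩)
  · have hmono : ∀ p q : V, G.Reachable p q →
        (edgeGraph ends (insert f S)).Reachable p q := fun p q h =>
      h.mono (edgeGraph_mono (Finset.subset_insert f S))
    have hab : (edgeGraph ends (insert f S)).Reachable a b := by
      by_cases h : a = b
      · exact h ▸ Reachable.refl _
      · exact SimpleGraph.Adj.reachable ⟨h, f, Finset.mem_insert_self f S, hf⟩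
    rintro (h | ⟨h1, h2⟩ | ⟨h1, h2⟩)
    · exact hmono _ _ h
    · exact ((hmono _ _ h1).trans hab).trans (hmono _ _ h2)
    · exact ((hmono _ _ h1).trans hab.symm).trans (hmono _ _ h2)

lemma reachable_eq_of_reachable {ends : E → Sym2 V} {S : Finset E} {f : E} {a b : V}
    (hf : ends f = s(a, b)) (h : (edgeGraph ends S).Reachable a b) :
    (edgeGraph ends (insert f S)).Reachable = (edgeGraph ends S).Reachable := by
  funext x y
  apply propext
  rw [reach_insert hf]
  constructor
  · rintro (h' | ⟨h1, h2⟩ | ⟨h1, h2⟩)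
    · exact h'
    · exact (h1.trans h).trans h2
    · exact (h1.trans h.symm).trans h2
  · exact Or.inl

lemma kc_insert_of_reachable {ends : E → Sym2 V} {S : Finset E} {f : E} {a b : V}
    (hf : ends f = s(a, b)) (h : (edgeGraph ends S).Reachable a b) :
    kc ends (insert f S) = kc ends S := by
  unfold kc SimpleGraph.ConnectedComponent
  rw [reachable_eq_of_reachable hf h]

lemma kc_le_kc_insert_add_one [Finite V] {ends : E → Sym2 V} (S : Finset E) (f : E) :
    kc ends S ≤ kc ends (insert f S) + 1 := by
  obtain ⟨a, b, hf⟩ := sym2_exists (ends f)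
  set G := edgeGraph ends S
  set H := edgeGraph ends (insert f S)
  haveI : Finite G.ConnectedComponent := Quot.finite _
  haveI : Finite H.ConnectedComponent := Quot.finite _
  have hle : G ≤ H := edgeGraph_mono (Finset.subset_insert f S)
  let φ : G.ConnectedComponent → H.ConnectedComponent :=
    SimpleGraph.ConnectedComponent.map (SimpleGraph.Hom.ofLE hle)
  classical
  let j : G.ConnectedComponent → H.ConnectedComponent ⊕ Unit := fun x =>
    if x = G.connectedComponentMk a then Sum.inr () else Sum.inl (φ x)
  have hj : Function.Injective j := by
    intro x y hxy
    induction x using SimpleGraph.ConnectedComponent.ind with | _ u =>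
    induction y using SimpleGraph.ConnectedComponent.ind with | _ v =>
    by_cases hx : G.connectedComponentMk u = G.connectedComponentMk a <;>
      by_cases hy : G.connectedComponentMk v = G.connectedComponentMk a
    · rw [hx, hy]
    · simp only [j, if_pos hx, if_neg hy] at hxy
      exact absurd hxy (by simp)
    · simp only [j, if_pos hy, if_neg hx] at hxy
      exact absurd hxy (by simp)
    · simp only [j, if_neg hx, if_neg hy] at hxy
      have : φ (G.connectedComponentMk u) = φ (G.connectedComponentMk v) :=
        Sum.inl.inj hxy
      have hr : H.Reachable u v := SimpleGraph.ConnectedComponent.exact this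
      rcases (reach_insert hf u v).mp hr with h | ⟨h1, h2⟩ | ⟨h1, h2⟩
      · exact SimpleGraph.ConnectedComponent.sound h
      · exact absurd (SimpleGraph.ConnectedComponent.sound h1) hx
      · exact absurd (SimpleGraph.ConnectedComponent.sound h2.symm) hy
  have hcard : Nat.card G.ConnectedComponent ≤ Nat.card (H.ConnectedComponent ⊕ Unit) :=
    Nat.card_le_card_of_injective j hj
  rw [Nat.card_sum] at hcard
  have e1 : kc ends S = Nat.card G.ConnectedComponent := rfl
  have e2 : kc ends (insert f S) = Nat.card H.ConnectedComponent := rfl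
  simp [e1, e2, Nat.card_unique] at *
  omega

lemma kc_insert_of_not_reachable [Finite V] {ends : E → Sym2 V} {S : Finset E} {f : E} {a b : V}
    (hf : ends f = s(a, b)) (h : ¬ (edgeGraph ends S).Reachable a b) :
    kc ends (insert f S) + 1 = kc ends S := by
  have hub := kc_le_kc_insert_add_one (ends := ends) S f
  have hab : a ≠ b := by rintro rfl; exact h (SimpleGraph.Reachable.refl _)
  set G := edgeGraph ends S
  set H := edgeGraph ends (insert f S)
  haveI : Finite G.ConnectedComponent := Quot.finite _
  haveI : Finite H.ConnectedComponent := Quot.finite _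
  haveI : Fintype G.ConnectedComponent := Fintype.ofFinite _
  haveI : Fintype H.ConnectedComponent := Fintype.ofFinite _
  have hle : G ≤ H := edgeGraph_mono (Finset.subset_insert f S)
  let φ : G.ConnectedComponent → H.ConnectedComponent :=
    SimpleGraph.ConnectedComponent.map (SimpleGraph.Hom.ofLE hle)
  have hsurj : Function.Surjective φ := by
    intro c
    induction c using SimpleGraph.ConnectedComponent.ind with | _ v =>
    exact ⟨G.connectedComponentMk v, rfl⟩
  have hninj : ¬ Function.Injective φ := by
    intro hinj
    have : φ (G.connectedComponentMk a) = φ (G.connectedComponentMk b) := by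
      apply SimpleGraph.ConnectedComponent.sound
      exact SimpleGraph.Adj.reachable ⟨hab, f, Finset.mem_insert_self f S, hf⟩
    exact h (SimpleGraph.ConnectedComponent.exact (hinj this))
  have hlt : Nat.card H.ConnectedComponent < Nat.card G.ConnectedComponent := by
    rw [Nat.card_eq_fintype_card, Nat.card_eq_fintype_card]
    exact Fintype.card_lt_of_surjective_not_injective φ hsurj hninj
  have e1 : kc ends S = Nat.card G.ConnectedComponent := rfl
  have e2 : kc ends (insert f S) = Nat.card H.ConnectedComponent := rfl
  omega

lemma kc_empty [Fintype V] (ends : E → Sym2 V) : kc ends (∅ : Finset E) = Fintype.card V := by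
  have hR : (edgeGraph ends (∅ : Finset E)).Reachable = fun x y => x = y := by
    funext x y
    apply propext
    constructor
    · rintro ⟨w⟩
      induction w with
      | nil => rfl
      | cons hadj _ _ => exact absurd hadj.2 (by simp)
    · rintro rfl; exact SimpleGraph.Reachable.refl _
  unfold kc SimpleGraph.ConnectedComponent
  rw [hR]
  have : Nat.card (Quot fun x y : V => x = y) = Nat.card V :=
    Nat.card_congr ⟨Quot.lift id (fun a b h => h), Quot.mk _, fun q => by
      induction q using Quot.ind with | _ v => rfl, fun v => rfl⟩
  rw [this, Nat.card_eq_fintype_card]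

lemma kc_bound [Fintype V] (ends : E → Sym2 V) (S : Finset E) :
    Fintype.card V ≤ kc ends S + S.card := by
  classical
  induction S using Finset.induction with
  | empty => simp [kc_empty]
  | @insert f S hf ih =>
    have := kc_le_kc_insert_add_one (ends := ends) S f
    rw [Finset.card_insert_of_notMem hf]
    omega

/-- `f`'s endpoints are connected in the subgraph spanned by `S`. -/
def spanned (ends : E → Sym2 V) (S : Finset E) (f : E) : Prop :=
  ∃ a b, ends f = s(a, b) ∧ (edgeGraph ends S).Reachable a b

lemma spanned_mono {ends : E → Sym2 V} {S T : Finset E} (h : S ⊆ T) {f : E}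
    (hs : spanned ends S f) : spanned ends T f := by
  obtain ⟨a, b, hf, hr⟩ := hs
  exact ⟨a, b, hf, hr.mono (edgeGraph_mono h)⟩

lemma kc_insert_of_spanned {ends : E → Sym2 V} {S : Finset E} {f : E}
    (h : spanned ends S f) : kc ends (insert f S) = kc ends S := by
  obtain ⟨a, b, hf, hr⟩ := h
  exact kc_insert_of_reachable hf hr

lemma kc_insert_of_not_spanned [Fintype V] {ends : E → Sym2 V} {S : Finset E} {f : E}
    (h : ¬ spanned ends S f) : kc ends (insert f S) + 1 = kc ends S := by
  obtain ⟨a, b, hf⟩ := sym2_exists (ends f)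
  exact kc_insert_of_not_reachable hf (fun hr => h ⟨a, b, hf, hr⟩)

lemma kc_union_of_spanned [Fintype V] {ends : E → Sym2 V} {B : Finset E} (D : Finset E)
    (h : ∀ f ∈ D, spanned ends B f) : kc ends (B ∪ D) = kc ends B := by
  classical
  induction D using Finset.induction with
  | empty => simp
  | @insert f D hf ih =>
    have h1 : ∀ g ∈ D, spanned ends B g := fun g hg => h g (Finset.mem_insert_of_mem hg)
    have h2 : spanned ends B f := h f (Finset.mem_insert_self f D)
    rw [Finset.union_insert, kc_insert_of_spanned
      (spanned_mono (Finset.subset_union_left) h2 : spanned ends (B ∪ D) f), ih h1]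

set_option linter.unusedSectionVars false

variable [Fintype V] [Fintype E]

noncomputable def greedy (ends : E → Sym2 V) : List E → Finset E → Finset E
  | [], S => S
  | f :: l, S => if spanned ends S f then greedy ends l S else greedy ends l (insert f S)

lemma greedy_nil (ends : E → Sym2 V) (S : Finset E) : greedy ends [] S = S := rfl

lemma greedy_cons_pos {ends : E → Sym2 V} {S : Finset E} {f : E} (l : List E)
    (h : spanned ends S f) : greedy ends (f :: l) S = greedy ends l S := by
  simp [greedy, h]

lemma greedy_cons_neg {ends : E → Sym2 V} {S : Finset E} {f : E} (l : List E)
    (h : ¬ spanned ends S f) : greedy ends (f :: l) S = greedy ends l (insert f S) := by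
  simp [greedy, h]

lemma greedy_subset (ends : E → Sym2 V) (l : List E) (S : Finset E) :
    S ⊆ greedy ends l S := by
  induction l generalizing S with
  | nil => exact fun x hx => hx
  | cons g t ih =>
    by_cases h : spanned ends S g
    · rw [greedy_cons_pos t h]; exact ih S
    · rw [greedy_cons_neg t h]
      exact (Finset.subset_insert g S).trans (ih (insert g S))

lemma greedy_subset_union (ends : E → Sym2 V) (l : List E) (S : Finset E) :
    greedy ends l S ⊆ S ∪ l.toFinset := by
  induction l generalizing S with
  | nil => simp [greedy_nil]
  | cons g t ih =>
    by_cases h : spanned ends S g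
    · rw [greedy_cons_pos t h]
      refine (ih S).trans ?_
      intro x hx; simp at hx ⊢; tauto
    · rw [greedy_cons_neg t h]
      refine (ih (insert g S)).trans ?_
      intro x hx; simp at hx ⊢; tauto

lemma greedy_card (ends : E → Sym2 V) (l : List E) (S : Finset E) (hnd : l.Nodup)
    (hd : ∀ x ∈ l, x ∉ S) :
    kc ends (greedy ends l S) + (greedy ends l S).card = kc ends S + S.card := by
  induction l generalizing S with
  | nil => rfl
  | cons g t ih =>
    have hgS : g ∉ S := hd g (List.mem_cons_self)
    by_cases h : spanned ends S g
    · rw [greedy_cons_pos t h]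
      exact ih S (List.nodup_cons.mp hnd).2 (fun x hx => hd x (List.mem_cons_of_mem g hx))
    · rw [greedy_cons_neg t h]
      have hd' : ∀ x ∈ t, x ∉ insert g S := by
        intro x hx
        simp only [Finset.mem_insert, not_or]
        exact ⟨fun hxg => (List.nodup_cons.mp hnd).1 (hxg ▸ hx),
          hd x (List.mem_cons_of_mem g hx)⟩
      rw [ih (insert g S) (List.nodup_cons.mp hnd).2 hd']
      rw [Finset.card_insert_of_notMem hgS]
      have := kc_insert_of_not_spanned (ends := ends) h
      omega

lemma greedy_spanned (ends : E → Sym2 V) (l : List E) (S : Finset E) (hnd : l.Nodup)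
    (hd : ∀ x ∈ l, x ∉ S) (l₁ : List E) (f : E) (l₂ : List E) (hl : l = l₁ ++ f :: l₂)
    (hf : f ∉ greedy ends l S) :
    spanned ends (greedy ends l S \ l₂.toFinset) f := by
  induction l generalizing S l₁ with
  | nil => exact absurd hl (by simp)
  | cons g t ih =>
    cases l₁ with
    | nil =>
      simp only [List.nil_append, List.cons.injEq] at hl
      obtain ⟨rfl, rfl⟩ := hl
      by_cases h : spanned ends S g
      · rw [greedy_cons_pos t h] at hf ⊢
        refine spanned_mono ?_ h
        intro x hx
        rw [Finset.mem_sdiff]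
        refine ⟨greedy_subset ends t S hx, ?_⟩
        intro hx2
        exact hd x (List.mem_cons_of_mem g (List.mem_toFinset.mp hx2)) hx
      · rw [greedy_cons_neg t h] at hf
        exact absurd (greedy_subset ends t (insert g S) (Finset.mem_insert_self g S)) hf
    | cons g' t₁ =>
      simp only [List.cons_append, List.cons.injEq] at hl
      obtain ⟨rfl, rfl⟩ := hl
      have hnd' : (t₁ ++ f :: l₂).Nodup := (List.nodup_cons.mp hnd).2
      have hgt : g ∉ t₁ ++ f :: l₂ := (List.nodup_cons.mp hnd).1
      by_cases h : spanned ends S g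
      · rw [greedy_cons_pos _ h] at hf ⊢
        exact ih S hnd' (fun x hx => hd x (List.mem_cons_of_mem g hx)) t₁ rfl hf
      · rw [greedy_cons_neg _ h] at hf ⊢
        refine ih (insert g S) hnd' ?_ t₁ rfl hf
        intro x hx
        simp only [Finset.mem_insert, not_or]
        exact ⟨fun hxg => hgt (hxg ▸ hx), hd x (List.mem_cons_of_mem g hx)⟩

lemma not_isSpanningForest_swap {ends : E → Sym2 V} {B : Finset E} {e f : E}
    (he : e ∈ B) (hfB : f ∉ B) (hsp : spanned ends (B.erase e) f) :
    ¬ ((insert f (B.erase e)).card + kc ends (insert f (B.erase e)) = Fintype.card V) := by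
  intro hc
  have hkc : kc ends (insert f (B.erase e)) = kc ends (B.erase e) := kc_insert_of_spanned hsp
  have hfe : f ∉ B.erase e := fun h => hfB (Finset.mem_of_mem_erase h)
  have hcard : (insert f (B.erase e)).card = (B.erase e).card + 1 :=
    Finset.card_insert_of_notMem hfe
  have hb := kc_bound ends (B.erase e)
  have hce : (B.erase e).card + 1 = B.card := by
    rw [Finset.card_erase_of_mem he]
    have : 1 ≤ B.card := Finset.card_pos.mpr ⟨e, he⟩
    omega
  omega

/-- Priority order: `x` must be processed before `y`. -/
def prio [LinearOrder E] (A : Finset E) (x y : E) : Prop :=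
  (x ∈ A ∧ y ∈ A ∧ x < y) ∨ (x ∈ A ∧ y ∉ A) ∨ (x ∉ A ∧ y ∉ A ∧ y < x)

lemma mem_suffix_of_pairwise {L l₁ l₂ : List E} {f e : E} {R : E → E → Prop}
    (hp : L.Pairwise R) (hL : L = l₁ ++ f :: l₂) (heL : e ∈ L) (hef : e ≠ f)
    (hnR : ¬ R e f) : e ∈ l₂ := by
  subst hL
  rcases List.mem_append.mp heL with h1 | h2
  · exact absurd ((List.pairwise_append.mp hp).2.2 e h1 f (List.mem_cons_self)) hnR
  · rcases List.mem_cons.mp h2 with rfl | h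
    · exact absurd rfl hef
    · exact h

section Main

variable [LinearOrder E]

lemma mysort_sorted_lt (A : Finset E) : (A.sort LE.le).Pairwise (· < ·) := by
  have := A.sortedLT_sort.pairwise; convert this using 2

lemma mysort_nodup (A : Finset E) : (A.sort LE.le).Nodup := by
  have := A.sort_nodup LE.le; convert this using 2

lemma mem_mysort {A : Finset E} {x : E} : x ∈ A.sort LE.le ↔ x ∈ A := by
  have := Finset.mem_sort (s := A) (a := x) LE.le
  convert this using 3

lemma processList_pairwise (A : Finset E) :
    ((A.sort LE.le) ++ ((Aᶜ.sort LE.le).reverse)).Pairwise (prio A) := by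
  rw [List.pairwise_append]
  refine ⟨?_, ?_, ?_⟩
  · refine List.Pairwise.imp_of_mem ?_ (mysort_sorted_lt A)
    intro x y hx hy hxy
    exact Or.inl ⟨mem_mysort.mp hx, mem_mysort.mp hy, hxy⟩
  · rw [List.pairwise_reverse]
    refine List.Pairwise.imp_of_mem ?_ (mysort_sorted_lt Aᶜ)
    intro x y hx hy hxy
    have hx' : x ∉ A := by simpa using mem_mysort.mp hx
    have hy' : y ∉ A := by simpa using mem_mysort.mp hy
    exact Or.inr (Or.inr ⟨hy', hx', hxy⟩)
  · intro x hx y hy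
    have hx' : x ∈ A := mem_mysort.mp hx
    have hy' : y ∉ A := by
      simpa using mem_mysort.mp (List.mem_reverse.mp hy)
    exact Or.inr (Or.inl ⟨hx', hy'⟩)

lemma processList_nodup (A : Finset E) :
    ((A.sort LE.le) ++ ((Aᶜ.sort LE.le).reverse)).Nodup := by
  rw [List.nodup_append]
  refine ⟨mysort_nodup A, List.nodup_reverse.mpr (mysort_nodup Aᶜ), ?_⟩
  rintro x hx _ hx2 rfl
  have h1 : x ∈ A := mem_mysort.mp hx
  have h2 : x ∉ A := by simpa using mem_mysort.mp (List.mem_reverse.mp hx2)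
  exact h2 h1

lemma processList_mem (A : Finset E) (x : E) :
    x ∈ (A.sort LE.le) ++ ((Aᶜ.sort LE.le).reverse) := by
  rw [List.mem_append, List.mem_reverse, mem_mysort, mem_mysort, Finset.mem_compl]
  tauto

end Main


/-- Surjectivity: every edge subset `A` arises from some spanning
forest `(V, A_f)` as `(A_f \ A_i) ∪ A_e` with `A_i ⊆ E_i(F)`, `A_e ⊆ E_e(F)`;
moreover `A_i = A_f \ A` and `A_e = A \ A_f`. -/
theorem activity_map_surjective {V E : Type} [Fintype V] [Fintype E] [DecidableEq E]
    [LinearOrder E] (ends : E → Sym2 V) (A : Finset E) :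
    ∃ Af : Finset E, IsSpanningForest ends Af ∧
      Af \ A ⊆ intAct ends Af ∧ A \ Af ⊆ extAct ends Af ∧
      A = (Af \ (Af \ A)) ∪ (A \ Af) := by
  set L : List E := (A.sort LE.le) ++ ((Aᶜ.sort LE.le).reverse) with hLdef
  have hnd : L.Nodup := processList_nodup A
  have hpw : L.Pairwise (prio A) := processList_pairwise A
  have hmemL : ∀ x : E, x ∈ L := processList_mem A
  set B : Finset E := greedy ends L ∅ with hBdef
  have hd0 : ∀ x ∈ L, x ∉ (∅ : Finset E) := by simp
  have hcard : kc ends B + B.card = Fintype.card V := by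
    have h := greedy_card ends L ∅ hnd hd0
    rw [kc_empty] at h
    simpa using h
  have hrej : ∀ f, f ∉ B → spanned ends B f := by
    intro f hf
    obtain ⟨l₁, l₂, hdec⟩ := List.append_of_mem (hmemL f)
    exact spanned_mono Finset.sdiff_subset
      (greedy_spanned ends L ∅ hnd hd0 l₁ f l₂ hdec hf)
  have hkcu : kc ends B = kc ends Finset.univ := by
    have h1 : ∀ f ∈ Finset.univ \ B, spanned ends B f := fun f hf =>
      hrej f (Finset.mem_sdiff.mp hf).2
    have h2 := kc_union_of_spanned (ends := ends) (Finset.univ \ B) h1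
    rw [Finset.union_sdiff_of_subset (Finset.subset_univ B)] at h2
    exact h2.symm
  have hSF : IsSpanningForest ends B := ⟨by omega, hkcu⟩
  have key : ∀ e f : E, e ∈ B → f ∉ B → ¬ prio A e f →
      ¬ IsSpanningForest ends (swapEdge B e f) := by
    intro e f heB hfB hnp hSF'
    have hef : e ≠ f := fun h => hfB (h ▸ heB)
    obtain ⟨l₁, l₂, hdec⟩ := List.append_of_mem (hmemL f)
    have hsp := greedy_spanned ends L ∅ hnd hd0 l₁ f l₂ hdec hfB
    have hel₂ : e ∈ l₂ := mem_suffix_of_pairwise hpw hdec (hmemL e) hef hnp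
    have hsub : B \ l₂.toFinset ⊆ B.erase e := by
      intro x hx
      rw [Finset.mem_sdiff] at hx
      exact Finset.mem_erase.mpr
        ⟨fun hxe => hx.2 (hxe ▸ List.mem_toFinset.mpr hel₂), hx.1⟩
    exact not_isSpanningForest_swap heB hfB (spanned_mono hsub hsp) hSF'.1
  refine ⟨B, hSF, ?_, ?_, ?_⟩
  · intro e he
    rw [Finset.mem_sdiff] at he
    rw [intAct, Finset.mem_filter]
    refine ⟨Finset.mem_univ e, he.1, ?_⟩
    rintro ⟨f, hfB, hef, hSF'⟩
    refine key e f he.1 hfB ?_ hSF'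
    rintro (⟨heA, -, -⟩ | ⟨heA, -⟩ | ⟨-, -, hlt⟩)
    exacts [he.2 heA, he.2 heA, absurd hlt (not_lt.mpr hef.le)]
  · intro f hf
    rw [Finset.mem_sdiff] at hf
    rw [extAct, Finset.mem_filter]
    refine ⟨Finset.mem_univ f, hf.2, ?_⟩
    rintro ⟨e, heB, hfe, hSF'⟩
    refine key e f heB hf.2 ?_ hSF'
    rintro (⟨-, -, hlt⟩ | ⟨-, hfA⟩ | ⟨-, hfA, -⟩)
    exacts [absurd hlt (not_lt.mpr hfe.le), hfA hf.1, hfA hf.1]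
  · ext x
    simp only [Finset.mem_union, Finset.mem_sdiff]
    tauto
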